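/- Let m, n be positive integers with m | n, and let μ₂ be the mn/m × mn/m-style block operator on P^m as above, with μ an endomorphism of P whose minimal polynomial is the monic degree-(n/m) polynomial R̃. Then the minimal polynomial of μ₂ is R̃(z^m), which has degree n. -/

import Mathlib

open Polynomial

/-- The algebra homomorphism `Module.End R M →ₐ[R] Module.End R (I → M)` acting diagonally. -/
noncomputable def diagAlgHom (R : Type*) [CommSemiring R] (M : Type*) [AddCommMonoid M]
    [Module R M] (I : Type*) : Module.End R M →ₐ[R] Module.End R (I → M) where
  toFun f := f.compLeft I
  map_one' := by ext v i; rfl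
  map_mul' f g := by ext v i; rfl
  map_zero' := by ext v i; rfl
  map_add' f g := by ext v i; rfl
  commutes' c := by
    ext v i
    simp [LinearMap.compLeft, Module.algebraMap_end_apply]
    show (algebraMap R (Module.End R M) c) (v i) = c • v i
    rw [Module.algebraMap_end_apply]

/-- The minimal polynomial of the cyclic block operator `μ₂` on `P^m` is
`R̃(z^m)`, which has degree `n`. -/
theorem stmt_3 (P : Type*) [AddCommGroup P] [Module ℂ P] [FiniteDimensional ℂ P]
    [Nontrivial P] (m n : ℕ) (hm : 0 < m) (hn : 0 < n) (hdvd : m ∣ n)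
    (R : Polynomial ℂ) (hR : R.Monic) (hdeg : R.natDegree = n / m)
    (μ : Module.End ℂ P) (hmin : minpoly ℂ μ = R)
    (μ₂ : Module.End ℂ (Fin m → P))
    (hμ₂ : ∀ (p : Fin m → P) (i : Fin m),
      μ₂ p i = if (i : ℕ) = 0 then μ (p ⟨m - 1, by omega⟩)
        else p ⟨(i : ℕ) - 1, by omega⟩) :
    minpoly ℂ μ₂ = R.comp (Polynomial.X ^ m) ∧
      (R.comp (Polynomial.X ^ m)).natDegree = n := by
  -- single-step lemmas
  have step1 : ∀ q : P, μ₂ (Pi.single (⟨m - 1, by omega⟩ : Fin m) q)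
      = Pi.single (⟨0, hm⟩ : Fin m) (μ q) := by
    intro q
    funext i
    have hi := i.isLt
    rw [hμ₂]
    simp only [Pi.single_apply, Fin.ext_iff, apply_ite μ, map_zero]
    split_ifs <;> first | rfl | omega
  have step2 : ∀ (j : ℕ) (hj : j + 1 < m) (q : P),
      μ₂ (Pi.single (⟨j, by omega⟩ : Fin m) q) = Pi.single (⟨j + 1, hj⟩ : Fin m) q := by
    intro j hj q
    funext i
    have hi := i.isLt
    rw [hμ₂]
    simp only [Pi.single_apply, Fin.ext_iff, apply_ite μ, map_zero]
    split_ifs <;> first | rfl | omega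
  -- key power formula
  have key : ∀ (k : ℕ) (j : Fin m) (p : P),
      (μ₂ ^ k) (Pi.single j p)
        = Pi.single (⟨((j : ℕ) + k) % m, Nat.mod_lt _ hm⟩ : Fin m)
            ((μ ^ (((j : ℕ) + k) / m)) p) := by
    intro k
    induction k with
    | zero =>
      intro j p
      have hj := j.isLt
      have h1 : ((j : ℕ) + 0) % m = (j : ℕ) := by
        rw [Nat.add_zero]; exact Nat.mod_eq_of_lt hj
      have h2 : ((j : ℕ) + 0) / m = 0 := by
        rw [Nat.add_zero]; exact Nat.div_eq_of_lt hj
      simp only [h2, pow_zero, Module.End.one_apply]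
      have h3 : (⟨((j : ℕ) + 0) % m, Nat.mod_lt _ hm⟩ : Fin m) = j := by
        apply Fin.eq_of_val_eq; exact h1
      rw [h3]
    | succ k ih =>
      intro j p
      have hj := j.isLt
      rw [pow_succ, Module.End.mul_apply]
      rcases eq_or_ne (j : ℕ) (m - 1) with he | he
      · have hstep : μ₂ (Pi.single j p) = Pi.single (⟨0, hm⟩ : Fin m) (μ p) := by
          have hjeq : j = ⟨m - 1, by omega⟩ := by apply Fin.eq_of_val_eq; exact he
          conv_lhs => rw [hjeq]
          exact step1 p
        rw [hstep, ih ⟨0, hm⟩ (μ p)]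
        have hz : ((⟨0, hm⟩ : Fin m) : ℕ) + k = k := by simp
        have harith : (j : ℕ) + (k + 1) = k + m := by omega
        have h3 : (μ ^ (k / m)) (μ p) = (μ ^ (k / m + 1)) p := by
          rw [pow_succ, Module.End.mul_apply]
        simp only [hz, harith, Nat.add_mod_right, Nat.add_div_right _ hm, h3]
      · have hj1 : (j : ℕ) + 1 < m := by omega
        have hstep : μ₂ (Pi.single j p) = Pi.single (⟨(j : ℕ) + 1, hj1⟩ : Fin m) p := by
          have hjeq : j = ⟨(j : ℕ), by omega⟩ := by apply Fin.eq_of_val_eq; rfl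
          conv_lhs => rw [hjeq]
          exact step2 (j : ℕ) hj1 p
        rw [hstep, ih ⟨(j : ℕ) + 1, hj1⟩ p]
        have hz : ((⟨(j : ℕ) + 1, hj1⟩ : Fin m) : ℕ) + k = (j : ℕ) + (k + 1) := by
          simp; omega
        simp only [hz]
  -- μ₂ ^ m is the diagonal action of μ
  have hpow : μ₂ ^ m = diagAlgHom ℂ P (Fin m) μ := by
    apply LinearMap.ext
    intro v
    conv_lhs => rw [← Finset.univ_sum_single v]
    rw [map_sum]
    have hterm : ∀ j : Fin m, (μ₂ ^ m) (Pi.single j (v j)) = Pi.single j (μ (v j)) := by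
      intro j
      rw [key m j (v j)]
      have hj := j.isLt
      have h1 : ((j : ℕ) + m) % m = (j : ℕ) := by
        rw [Nat.add_mod_right]; exact Nat.mod_eq_of_lt hj
      have h2 : ((j : ℕ) + m) / m = 1 := by
        rw [Nat.add_div_right _ hm, Nat.div_eq_of_lt hj]
      have h3 : (⟨((j : ℕ) + m) % m, Nat.mod_lt _ hm⟩ : Fin m) = j := Fin.eq_of_val_eq h1
      rw [h2, h3, pow_one]
    simp_rw [hterm]
    rw [Finset.univ_sum_single (fun j => μ (v j))]
    rfl
  -- R(X^m) annihilates μ₂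
  have hQ0 : aeval μ₂ (R.comp (X ^ m)) = 0 := by
    rw [aeval_comp, map_pow, aeval_X, hpow,
      Polynomial.aeval_algHom_apply (diagAlgHom ℂ P (Fin m)) μ R,
      ← hmin, minpoly.aeval, map_zero]
  -- degree facts
  have hQmo : (R.comp (X ^ m)).Monic := hR.comp (monic_X_pow m) (by
    rw [natDegree_X_pow]; omega)
  have hQdeg : (R.comp (X ^ m)).natDegree = n := by
    rw [natDegree_comp, natDegree_X_pow, hdeg, Nat.div_mul_cancel hdvd]
  refine ⟨?_, hQdeg⟩
  have hint : IsIntegral ℂ μ₂ := LinearMap.isIntegral μ₂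
  have hdvdQ : minpoly ℂ μ₂ ∣ R.comp (X ^ m) := minpoly.dvd ℂ μ₂ hQ0
  refine (eq_of_monic_of_dvd_of_natDegree_le (minpoly.monic hint) hQmo hdvdQ ?_).symm
  rw [hQdeg]
  by_contra hlt
  push_neg at hlt
  set q := minpoly ℂ μ₂ with hq
  have hq0 : q ≠ 0 := minpoly.ne_zero hint
  have hqmo : q.Monic := minpoly.monic hint
  set d := q.natDegree with hd
  set r := d % m with hr
  set s : Polynomial ℂ :=
    ∑ k ∈ (Finset.range (d + 1)).filter (fun k => k % m = r),
      C (q.coeff k) * X ^ (k / m) with hs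
  -- aeval μ s = 0
  have haevals : aeval μ s = 0 := by
    apply LinearMap.ext
    intro p
    have hz : (aeval μ₂ q) (Pi.single (⟨0, hm⟩ : Fin m) p) = 0 := by
      rw [minpoly.aeval]; rfl
    rw [Polynomial.aeval_eq_sum_range (p := q) μ₂, LinearMap.sum_apply] at hz
    have hz2 := congrFun hz (⟨r, Nat.mod_lt _ hm⟩ : Fin m)
    simp only [Finset.sum_apply, LinearMap.smul_apply, Pi.smul_apply, Pi.zero_apply] at hz2
    have hterm : ∀ k ∈ Finset.range (d + 1),
        q.coeff k • ((μ₂ ^ k) (Pi.single (⟨0, hm⟩ : Fin m) p)) (⟨r, Nat.mod_lt _ hm⟩ : Fin m)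
          = if k % m = r then q.coeff k • (μ ^ (k / m)) p else 0 := by
      intro k _
      rw [key k ⟨0, hm⟩ p]
      have hzk : ((⟨0, hm⟩ : Fin m) : ℕ) + k = k := by simp
      simp only [hzk, Pi.single_apply, Fin.mk.injEq]
      rcases eq_or_ne (k % m) r with hkr | hkr
      · rw [if_pos hkr, if_pos hkr.symm]
      · rw [if_neg hkr, if_neg (Ne.symm hkr), smul_zero]
    rw [Finset.sum_congr rfl hterm, ← Finset.sum_filter] at hz2
    have heval : (aeval μ s) p
        = ∑ k ∈ (Finset.range (d + 1)).filter (fun k => k % m = r),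
            q.coeff k • (μ ^ (k / m)) p := by
      rw [hs, map_sum, LinearMap.sum_apply]
      refine Finset.sum_congr rfl fun k _ => ?_
      simp [Algebra.smul_def, Module.algebraMap_end_apply]
    rw [heval, hz2, LinearMap.zero_apply]
  -- s must be zero
  have hs0 : s = 0 := by
    by_contra hsne
    have hle := minpoly.degree_le_of_ne_zero ℂ μ hsne haevals
    rw [hmin] at hle
    have hsdeg : s.natDegree ≤ d / m := by
      rw [hs]
      refine natDegree_sum_le_of_forall_le _ _ fun k hk => ?_
      rcases Finset.mem_filter.mp hk with ⟨hk1, _⟩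
      exact le_trans (natDegree_C_mul_X_pow_le _ _)
        (Nat.div_le_div_right (Nat.lt_succ_iff.mp (Finset.mem_range.mp hk1)))
    have hdm : d / m < n / m := Nat.div_lt_div_of_lt_of_dvd hdvd hlt
    have h1 : R.degree ≤ ((d / m : ℕ) : WithBot ℕ) :=
      hle.trans (degree_le_natDegree.trans (by exact_mod_cast hsdeg))
    rw [degree_eq_natDegree hR.ne_zero, Nat.cast_le, hdeg] at h1
    omega
  -- extract the leading coefficient
  have hdm_mem : d ∈ (Finset.range (d + 1)).filter (fun k => k % m = r) := by
    simp [Finset.mem_filter, Finset.mem_range, hr]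
  have hcoeff : s.coeff (d / m) = q.coeff d := by
    rw [hs, finset_sum_coeff]
    rw [Finset.sum_eq_single_of_mem d hdm_mem]
    · rw [coeff_C_mul, coeff_X_pow, if_pos rfl, mul_one]
    · intro k hk hkd
      rcases Finset.mem_filter.mp hk with ⟨_, hk2⟩
      rw [coeff_C_mul, coeff_X_pow, if_neg, mul_zero]
      intro hdk
      apply hkd
      have h1 : k = m * (k / m) + k % m := (Nat.div_add_mod k m).symm
      have h2 : d = m * (d / m) + d % m := (Nat.div_add_mod d m).symm
      rw [h1, h2, ← hdk, hk2, hr]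
  rw [hs0, coeff_zero] at hcoeff
  have := hqmo.coeff_natDegree
  rw [← hd, ← hcoeff] at this
  exact one_ne_zero this.symm
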